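/- The equation 9t^4 + v^4 + 10v^2w^2 + w^4 - 10t^2v^2 - 10t^2w^2 = 0 has a solution with t, v, w all nonzero real numbers and v^2 ≠ w^2; in particular there exist non-naturally-reductive metrics (t^2, v^2, w^2 not all equal) satisfying the first Ledger condition. -/

import Mathlib

theorem stmt5 :
    ∃ t v w : ℝ, t ≠ 0 ∧ v ≠ 0 ∧ w ≠ 0 ∧ v^2 ≠ w^2 ∧
      9*t^4 + v^4 + 10*v^2*w^2 + w^4 - 10*t^2*v^2 - 10*t^2*w^2 = 0 := by
  refine ⟨Real.sqrt (5/3), Real.sqrt 2, 1, ?_, ?_, one_ne_zero, ?_, ?_⟩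
  · positivity
  · positivity
  · rw [Real.sq_sqrt (by norm_num)]; norm_num
  · have h1 : (Real.sqrt (5/3))^2 = 5/3 := Real.sq_sqrt (by norm_num)
    have h2 : (Real.sqrt 2)^2 = 2 := Real.sq_sqrt (by norm_num)
    have h3 : (Real.sqrt (5/3))^4 = (5/3)^2 := by
      rw [show (Real.sqrt (5/3))^4 = ((Real.sqrt (5/3))^2)^2 by ring, h1]
    have h4 : (Real.sqrt 2)^4 = 2^2 := by
      rw [show (4:ℕ) = 2*2 from rfl, pow_mul, h2]
    rw [h1, h2, h3, h4]; norm_num
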